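/- arXiv:1009.6187 — 3 statements merged into one kernel-verified Lean document; each statement's English description precedes it below -/
import Mathlib

section
/- (Homogeneous Gagliardo–Nirenberg–Sobolev inequality, first-order case.) Let d ≥ 2, 1 ≤ r < d, k ≥ 1, and exponents p, q with 1 ≤ p ≤ rk ≤ dk, k < q < rkd/(d−r), and 1/r − k/q − 1/d < 0. Let α₁, α₂ > 0 satisfy 1 = α₁ k + α₂ and 1/q − 1/p = α₁(−1/d + 1/r − k/p). Then there exists a constant C depending only on p, q, r, k, d such that for every nonnegative continuously differentiable f : ℝ^d → ℝ with f ∈ L^p(ℝ^d) ∩ L^q(ℝ^d) and ∇(f^k) ∈ L^r(ℝ^d), one has ‖f‖_{L^q} ≤ C ‖f‖_{L^p}^{α₂} ‖∇(f^k)‖_{L^r}^{α₁}. -/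
open MeasureTheory Real Filter
open scoped ENNReal NNReal Topology

noncomputable section

abbrev Euc (d : ℕ) := EuclideanSpace ℝ (Fin d)

set_option maxHeartbeats 2000000

lemma abs_arctan_le_abs (x : ℝ) : |arctan x| ≤ |x| := by
  have key : ∀ y : ℝ, 0 ≤ y → |arctan y| ≤ |y| := by
    intro y hy
    have h0 : arctan 0 ≤ arctan y := arctan_strictMono.monotone hy
    rw [arctan_zero] at h0
    rw [abs_of_nonneg h0, abs_of_nonneg hy]
    have h2 := Real.le_tan h0 (arctan_lt_pi_div_two y)
    rwa [tan_arctan] at h2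
  rcases le_or_gt 0 x with h | h
  · exact key x h
  · have := key (-x) (by linarith)
    rwa [arctan_neg, abs_neg, abs_neg] at this

lemma tendsto_scaled_arctan (t : ℝ) :
    Tendsto (fun n : ℕ => ((n : ℝ) + 1) * arctan (t / ((n : ℝ) + 1))) atTop (𝓝 t) := by
  rcases eq_or_ne t 0 with rfl | ht
  · simpa [arctan_zero] using tendsto_const_nhds
  · have hslope : Tendsto (slope arctan 0) (𝓝[≠] 0) (𝓝 (1 / (1 + 0 ^ 2))) :=
      hasDerivAt_iff_tendsto_slope.mp (Real.hasDerivAt_arctan 0)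
    have hslope1 : Tendsto (slope arctan 0) (𝓝[≠] 0) (𝓝 1) := by simpa using hslope
    have hseq0 : Tendsto (fun n : ℕ => t / ((n : ℝ) + 1)) atTop (𝓝 0) := by
      have := tendsto_one_div_add_atTop_nhds_zero_nat.const_mul t
      simpa [div_eq_mul_inv, one_div] using this
    have hseq : Tendsto (fun n : ℕ => t / ((n : ℝ) + 1)) atTop (𝓝[≠] 0) := by
      refine tendsto_nhdsWithin_of_tendsto_nhds_of_eventually_within _ hseq0 ?_
      exact Eventually.of_forall fun n => by
        simp only [Set.mem_compl_iff, Set.mem_singleton_iff]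
        exact div_ne_zero ht (by positivity)
    have h1 : Tendsto (fun n : ℕ => slope arctan 0 (t / ((n : ℝ) + 1))) atTop (𝓝 1) :=
      hslope1.comp hseq
    have h2 : Tendsto (fun n : ℕ => t * slope arctan 0 (t / ((n : ℝ) + 1))) atTop (𝓝 (t * 1)) :=
      h1.const_mul t
    rw [mul_one] at h2
    convert h2 using 2 with n
    have hn : ((n : ℝ) + 1) ≠ 0 := by positivity
    rw [slope_def_field, arctan_zero, sub_zero, sub_zero]
    field_simp

lemma contDiff_rpow_const' {k : ℝ} (hk : 1 ≤ k) : ContDiff ℝ 1 fun t : ℝ => t ^ k := by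
  rw [contDiff_one_iff_deriv]
  refine ⟨Real.differentiable_rpow_const hk, ?_⟩
  have h : (deriv fun t : ℝ => t ^ k) = fun t : ℝ => k * t ^ (k - 1) :=
    funext fun t => Real.deriv_rpow_const t k
  rw [h]
  exact continuous_const.mul (continuous_iff_continuousAt.2 fun x =>
    Real.continuousAt_rpow_const x (k - 1) (Or.inr (by linarith)))

/-- Lyapunov/Hölder interpolation of `L^p` seminorms. -/
lemma eLpNorm_interp {α : Type*} [MeasurableSpace α] (μ : Measure α)
    (p q s θ : ℝ) (hp : 0 < p) (hq : 0 < q) (hs : 0 < s) (hθ : 0 < θ) (hθ1 : θ < 1)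
    (hpq : 1 / q = (1 - θ) / p + θ / s) (f : α → ℝ) (hf : AEMeasurable f μ) :
    eLpNorm f (ENNReal.ofReal q) μ ≤
      eLpNorm f (ENNReal.ofReal p) μ ^ (1 - θ) * eLpNorm f (ENNReal.ofReal s) μ ^ θ := by
  have hθ1' : 0 < 1 - θ := by linarith
  have h1 : (1 - θ) / p < 1 / q := by
    rw [hpq]
    have h0 : 0 < θ / s := by positivity
    linarith
  have h2 : θ / s < 1 / q := by
    rw [hpq]
    have h0 : 0 < (1 - θ) / p := by positivity
    linarith
  have ha1 : (1 - θ) * q < p := by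
    rw [div_lt_div_iff₀ hp hq] at h1; nlinarith
  have hb1 : θ * q < s := by
    rw [div_lt_div_iff₀ hs hq] at h2; nlinarith
  set a : ℝ := p / ((1 - θ) * q) with ha_def
  set b : ℝ := s / (θ * q) with hb_def
  have haq : 0 < (1 - θ) * q := by positivity
  have hbq : 0 < θ * q := by positivity
  have hconj : a.HolderConjugate b := by
    refine ⟨?_, lt_trans one_pos ?_, by positivity⟩
    rotate_left
    · rw [ha_def, lt_div_iff₀ haq, one_mul]; exact ha1
    · have h3 : (1 - θ) * q / p + θ * q / s = 1 := by
        have h4 : q * (1 / q) = q * ((1 - θ) / p + θ / s) := by rw [hpq]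
        rw [mul_one_div, div_self hq.ne'] at h4
        calc (1 - θ) * q / p + θ * q / s = q * ((1 - θ) / p + θ / s) := by ring
          _ = 1 := h4.symm
      rw [ha_def, hb_def, inv_div, inv_div, inv_one]
      exact h3
  -- abbreviations
  have hmeas : AEMeasurable (fun x => (‖f x‖₊ : ℝ≥0∞)) μ := hf.enorm
  have hg1 : AEMeasurable (fun x => (‖f x‖₊ : ℝ≥0∞) ^ ((1 - θ) * q)) μ :=
    hmeas.pow_const _
  have hg2 : AEMeasurable (fun x => (‖f x‖₊ : ℝ≥0∞) ^ (θ * q)) μ :=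
    hmeas.pow_const _
  have hsplit : ∀ x : α, (‖f x‖₊ : ℝ≥0∞) ^ q
      = (‖f x‖₊ : ℝ≥0∞) ^ ((1 - θ) * q) * (‖f x‖₊ : ℝ≥0∞) ^ (θ * q) := by
    intro x
    rw [← ENNReal.rpow_add_of_nonneg (x := (‖f x‖₊ : ℝ≥0∞)) ((1 - θ) * q) (θ * q)
      (by positivity) (by positivity)]
    congr 1
    ring
  have hholder := ENNReal.lintegral_mul_le_Lp_mul_Lq μ hconj hg1 hg2
  have hIq : ∫⁻ x, (‖f x‖₊ : ℝ≥0∞) ^ q ∂μ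
      ≤ (∫⁻ x, (‖f x‖₊ : ℝ≥0∞) ^ p ∂μ) ^ (1 / a) * (∫⁻ x, (‖f x‖₊ : ℝ≥0∞) ^ s ∂μ) ^ (1 / b) := by
    calc ∫⁻ x, (‖f x‖₊ : ℝ≥0∞) ^ q ∂μ
        = ∫⁻ x, ((fun x => (‖f x‖₊ : ℝ≥0∞) ^ ((1 - θ) * q)) *
            (fun x => (‖f x‖₊ : ℝ≥0∞) ^ (θ * q))) x ∂μ := by
          apply lintegral_congr; intro x; simpa using hsplit x
      _ ≤ (∫⁻ x, ((‖f x‖₊ : ℝ≥0∞) ^ ((1 - θ) * q)) ^ a ∂μ) ^ (1 / a) *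
          (∫⁻ x, ((‖f x‖₊ : ℝ≥0∞) ^ (θ * q)) ^ b ∂μ) ^ (1 / b) := hholder
      _ = (∫⁻ x, (‖f x‖₊ : ℝ≥0∞) ^ p ∂μ) ^ (1 / a) *
          (∫⁻ x, (‖f x‖₊ : ℝ≥0∞) ^ s ∂μ) ^ (1 / b) := by
          congr 2
          · apply lintegral_congr; intro x
            rw [← ENNReal.rpow_mul]
            congr 1
            rw [ha_def]; field_simp
          · apply lintegral_congr; intro x
            rw [← ENNReal.rpow_mul]
            congr 1
            rw [hb_def]; field_simp
  have hq0 : ENNReal.ofReal q ≠ 0 := by simp [ENNReal.ofReal_eq_zero]; linarith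
  have hp0 : ENNReal.ofReal p ≠ 0 := by simp [ENNReal.ofReal_eq_zero]; linarith
  have hs0 : ENNReal.ofReal s ≠ 0 := by simp [ENNReal.ofReal_eq_zero]; linarith
  rw [eLpNorm_eq_lintegral_rpow_enorm_toReal hq0 ENNReal.ofReal_ne_top,
    eLpNorm_eq_lintegral_rpow_enorm_toReal hp0 ENNReal.ofReal_ne_top,
    eLpNorm_eq_lintegral_rpow_enorm_toReal hs0 ENNReal.ofReal_ne_top,
    ENNReal.toReal_ofReal hq.le, ENNReal.toReal_ofReal hp.le, ENNReal.toReal_ofReal hs.le]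
  calc (∫⁻ x, (‖f x‖₊ : ℝ≥0∞) ^ q ∂μ) ^ (1 / q)
      ≤ ((∫⁻ x, (‖f x‖₊ : ℝ≥0∞) ^ p ∂μ) ^ (1 / a) *
          (∫⁻ x, (‖f x‖₊ : ℝ≥0∞) ^ s ∂μ) ^ (1 / b)) ^ (1 / q) :=
        ENNReal.rpow_le_rpow hIq (by positivity)
    _ = ((∫⁻ x, (‖f x‖₊ : ℝ≥0∞) ^ p ∂μ) ^ (1 / p)) ^ (1 - θ) *
        ((∫⁻ x, (‖f x‖₊ : ℝ≥0∞) ^ s ∂μ) ^ (1 / s)) ^ θ := by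
        rw [ENNReal.mul_rpow_of_nonneg _ _ (by positivity), ← ENNReal.rpow_mul,
          ← ENNReal.rpow_mul, ← ENNReal.rpow_mul, ← ENNReal.rpow_mul]
        congr 1
        · congr 1
          rw [ha_def]; field_simp
        · congr 1
          rw [hb_def]; field_simp

/-- Gagliardo–Nirenberg–Sobolev inequality without the compact support assumption,
for functions with `∫ ‖v‖^m < ∞` for some `0 < m ≤ r`. -/
lemma sobolev_noncompact (d : ℕ) (hd : 2 ≤ d) (r m rs : ℝ)
    (hr1 : 1 ≤ r) (hrd : r < d) (hm : 0 < m) (hmr : m ≤ r)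
    (hrs : rs⁻¹ = r⁻¹ - (d : ℝ)⁻¹)
    (v : Euc d → ℝ) (hv : ContDiff ℝ 1 v)
    (hT : ∫⁻ x, (‖v x‖₊ : ℝ≥0∞) ^ m ∂(volume : Measure (Euc d)) < ⊤) :
    eLpNorm v (ENNReal.ofReal rs) volume ≤
      (↑(SNormLESNormFDerivOfEqConst ℝ (volume : Measure (Euc d)) r.toNNReal + 1) : ℝ≥0∞) *
        eLpNorm (fderiv ℝ v) (ENNReal.ofReal r) volume := by
  have hr0 : (0 : ℝ) < r := by linarith
  have hd0 : (0 : ℝ) < d := by positivity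
  have hd0' : (0 : ℝ) < (d : ℝ) := by
    have : (2 : ℝ) ≤ d := by exact_mod_cast hd
    linarith
  have hinv : (0 : ℝ) < r⁻¹ - (d : ℝ)⁻¹ := by
    rw [sub_pos]
    have := one_div_lt_one_div_of_lt hr0 hrd
    simpa [one_div] using this
  have hrs0 : (0 : ℝ) < rs := by
    have : (0 : ℝ) < rs⁻¹ := hrs ▸ hinv
    exact inv_pos.mp this
  set Cnn : ℝ≥0 := SNormLESNormFDerivOfEqConst ℝ (volume : Measure (Euc d)) r.toNNReal + 1
    with hCnn_def
  set Cd : ℝ≥0∞ := (Cnn : ℝ≥0∞) with hCd_def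
  have hCd_top : Cd ≠ ⊤ := ENNReal.coe_ne_top
  set B : ℝ≥0∞ := eLpNorm (fderiv ℝ v) (ENNReal.ofReal r) volume with hB_def
  have hvd : Differentiable ℝ v := hv.differentiable one_ne_zero
  have hvcont : Continuous v := hv.continuous
  -- bump function and derivative bound
  set χ : ContDiffBump (0 : Euc d) := ⟨1, 2, one_pos, one_lt_two⟩ with hχ_def
  have hχcd : ContDiff ℝ 1 (χ : Euc d → ℝ) := χ.contDiff
  obtain ⟨M, hM⟩ : ∃ M, ∀ y, ‖fderiv ℝ (χ : Euc d → ℝ) y‖ ≤ M :=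
    (χ.hasCompactSupport.fderiv ℝ).exists_bound_of_continuous (hχcd.continuous_fderiv one_ne_zero)
  have hM0 : 0 ≤ M := (norm_nonneg _).trans (hM 0)
  -- the key estimate for truncation vₙ
  have key : ∀ n : ℕ,
      ∫⁻ x, (‖((n : ℝ) + 1) * arctan (v x / ((n : ℝ) + 1))‖₊ : ℝ≥0∞) ^ rs ∂volume
        ≤ (Cd * B) ^ rs := by
    intro n
    set c : ℝ := (n : ℝ) + 1 with hc_def
    have hc : (0 : ℝ) < c := by positivity
    set vn : Euc d → ℝ := fun x => c * arctan (v x / c) with hvn_def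
    -- basic bounds
    have hφ_le_abs : ∀ t : ℝ, |c * arctan (t / c)| ≤ |t| := by
      intro t
      rw [abs_mul, abs_of_pos hc]
      calc c * |arctan (t / c)| ≤ c * |t / c| := by
            exact mul_le_mul_of_nonneg_left (abs_arctan_le_abs _) hc.le
        _ = |t| := by rw [abs_div, abs_of_pos hc]; field_simp
    have hφ_bd : ∀ t : ℝ, |c * arctan (t / c)| ≤ c * (π / 2) := by
      intro t
      rw [abs_mul, abs_of_pos hc]
      refine mul_le_mul_of_nonneg_left ?_ hc.le
      rw [abs_le]
      exact ⟨(neg_pi_div_two_lt_arctan _).le, (arctan_lt_pi_div_two _).le⟩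
    -- smoothness of vn
    have hφcd : ContDiff ℝ 1 (fun t : ℝ => c * arctan (t / c)) :=
      (Real.contDiff_arctan.of_le le_top).comp (contDiff_id.div_const c) |>.const_smul c
    have hvncd : ContDiff ℝ 1 vn := hφcd.comp hv
    -- derivative of vn
    have hψ : ∀ x : Euc d, HasFDerivAt vn
        ((c * (1 / (1 + (v x / c) ^ 2) * (1 / c))) • fderiv ℝ v x) x := by
      intro x
      have h1 : HasDerivAt (fun t : ℝ => c * arctan (t / c))
          (c * (1 / (1 + (v x / c) ^ 2) * (1 / c))) (v x) := by
        have h2 : HasDerivAt (fun t : ℝ => arctan (t / c))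
            (1 / (1 + (v x / c) ^ 2) * (1 / c)) (v x) := by
          have h3 := (Real.hasDerivAt_arctan (v x / c)).comp (v x)
            ((hasDerivAt_id (v x)).div_const c)
          simpa [Function.comp_def] using h3
        exact h2.const_mul c
      exact h1.comp_hasFDerivAt x (hvd x).hasFDerivAt
    have hψ_le : ∀ x : Euc d, |c * (1 / (1 + (v x / c) ^ 2) * (1 / c))| ≤ 1 := by
      intro x
      have h1 : c * (1 / (1 + (v x / c) ^ 2) * (1 / c)) = 1 / (1 + (v x / c) ^ 2) := by
        field_simp
      rw [h1, abs_of_pos (by positivity)]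
      rw [div_le_one (by positivity)]
      nlinarith [sq_nonneg (v x / c)]
    have hDvn_norm : ∀ x : Euc d, ‖fderiv ℝ vn x‖ ≤ ‖fderiv ℝ v x‖ := by
      intro x
      rw [(hψ x).fderiv, norm_smul]
      calc ‖c * (1 / (1 + (v x / c) ^ 2) * (1 / c))‖ * ‖fderiv ℝ v x‖
          ≤ 1 * ‖fderiv ℝ v x‖ :=
            mul_le_mul_of_nonneg_right (hψ_le x) (norm_nonneg _)
        _ = ‖fderiv ℝ v x‖ := one_mul _
    -- r-integrability of vn
    set K : ℝ≥0∞ := ENNReal.ofReal (c * (π / 2)) with hK_def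
    set T : ℝ≥0∞ := ∫⁻ x, (‖v x‖₊ : ℝ≥0∞) ^ m ∂volume with hT_def
    set c1 : ℝ≥0∞ := (K ^ (r - m) * T) ^ (1 / r) with hc1_def
    have hc1_top : c1 ≠ ⊤ := by
      apply ENNReal.rpow_ne_top_of_nonneg (by positivity)
      exact ENNReal.mul_ne_top (ENNReal.rpow_ne_top_of_nonneg (by linarith) ENNReal.ofReal_ne_top)
        hT.ne
    have hvn_r : eLpNorm vn (ENNReal.ofReal r) volume ≤ c1 := by
      have hptw : ∀ x : Euc d, (‖vn x‖₊ : ℝ≥0∞) ^ r ≤ K ^ (r - m) * (‖v x‖₊ : ℝ≥0∞) ^ m := by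
        intro x
        have h1 : (‖vn x‖₊ : ℝ≥0∞) = ENNReal.ofReal ‖vn x‖ := (ofReal_norm_eq_enorm _).symm
        have h2 : (‖v x‖₊ : ℝ≥0∞) = ENNReal.ofReal ‖v x‖ := (ofReal_norm_eq_enorm _).symm
        have hle1 : (‖vn x‖₊ : ℝ≥0∞) ≤ K := by
          rw [h1, hK_def]
          exact ENNReal.ofReal_le_ofReal (hφ_bd (v x))
        have hle2 : (‖vn x‖₊ : ℝ≥0∞) ≤ (‖v x‖₊ : ℝ≥0∞) := by
          rw [h1, h2]
          exact ENNReal.ofReal_le_ofReal (hφ_le_abs (v x))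
        calc (‖vn x‖₊ : ℝ≥0∞) ^ r = (‖vn x‖₊ : ℝ≥0∞) ^ (r - m) * (‖vn x‖₊ : ℝ≥0∞) ^ m := by
              rw [← ENNReal.rpow_add_of_nonneg _ _ (by linarith) hm.le]
              congr 1; ring
          _ ≤ K ^ (r - m) * (‖v x‖₊ : ℝ≥0∞) ^ m := by
              exact mul_le_mul' (ENNReal.rpow_le_rpow hle1 (by linarith))
                (ENNReal.rpow_le_rpow hle2 hm.le)
      have hint : ∫⁻ x, (‖vn x‖₊ : ℝ≥0∞) ^ r ∂volume ≤ K ^ (r - m) * T := by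
        calc ∫⁻ x, (‖vn x‖₊ : ℝ≥0∞) ^ r ∂volume
            ≤ ∫⁻ x, K ^ (r - m) * (‖v x‖₊ : ℝ≥0∞) ^ m ∂volume := lintegral_mono hptw
          _ = K ^ (r - m) * T := by
              rw [lintegral_const_mul' _ _ (ENNReal.rpow_ne_top_of_nonneg (by linarith)
                ENNReal.ofReal_ne_top)]
      rw [eLpNorm_eq_lintegral_rpow_enorm_toReal (by simp [ENNReal.ofReal_eq_zero]; linarith)
        ENNReal.ofReal_ne_top, ENNReal.toReal_ofReal hr0.le]
      exact ENNReal.rpow_le_rpow hint (by positivity)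
    -- per-radius estimate
    have keyR : ∀ j : ℕ,
        ∫⁻ x, ((Metric.ball (0 : Euc d) ((j : ℝ) + 1)).indicator
            (fun x => (‖vn x‖₊ : ℝ≥0∞) ^ rs)) x ∂volume
          ≤ (Cd * (B + ENNReal.ofReal (M / ((j : ℝ) + 1)) * c1)) ^ rs := by
      intro j
      set R : ℝ := (j : ℝ) + 1 with hR_def
      have hR : (0 : ℝ) < R := by positivity
      set χR : Euc d → ℝ := fun x => χ (R⁻¹ • x) with hχR_def
      have hχRcd : ContDiff ℝ 1 χR := hχcd.comp (contDiff_id.const_smul R⁻¹)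
      have hχR_fd : ∀ x : Euc d, HasFDerivAt χR
          ((fderiv ℝ (χ : Euc d → ℝ) (R⁻¹ • x)).comp
            (R⁻¹ • ContinuousLinearMap.id ℝ (Euc d))) x := by
        intro x
        have h1 : HasFDerivAt (fun y : Euc d => R⁻¹ • y)
            (R⁻¹ • ContinuousLinearMap.id ℝ (Euc d)) x := (hasFDerivAt_id x).const_smul R⁻¹
        exact ((hχcd.differentiable one_ne_zero (R⁻¹ • x)).hasFDerivAt).comp x h1
      have hχR_norm : ∀ x : Euc d, ‖fderiv ℝ χR x‖ ≤ M / R := by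
        intro x
        rw [(hχR_fd x).fderiv]
        calc ‖(fderiv ℝ (χ : Euc d → ℝ) (R⁻¹ • x)).comp
              (R⁻¹ • ContinuousLinearMap.id ℝ (Euc d))‖
            ≤ ‖fderiv ℝ (χ : Euc d → ℝ) (R⁻¹ • x)‖ * ‖R⁻¹ • ContinuousLinearMap.id ℝ (Euc d)‖ :=
              ContinuousLinearMap.opNorm_comp_le _ _
          _ ≤ M * (R⁻¹ * 1) := by
              refine mul_le_mul (hM _) ?_ (norm_nonneg _) hM0
              calc ‖R⁻¹ • ContinuousLinearMap.id ℝ (Euc d)‖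
                  ≤ ‖R⁻¹‖ * ‖ContinuousLinearMap.id ℝ (Euc d)‖ :=
                    ContinuousLinearMap.opNorm_smul_le _ _
                _ ≤ R⁻¹ * 1 := by
                    rw [norm_inv, Real.norm_of_nonneg hR.le]
                    exact mul_le_mul_of_nonneg_left ContinuousLinearMap.norm_id_le
                      (by positivity)
          _ = M / R := by field_simp
      -- w = vn * χR
      set w : Euc d → ℝ := fun x => vn x * χR x with hw_def
      have hwcd : ContDiff ℝ 1 w := hvncd.mul hχRcd
      have hχR_cs : HasCompactSupport χR := by
        apply HasCompactSupport.of_support_subset_isCompact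
          (isCompact_closedBall (0 : Euc d) (2 * R))
        intro x hx
        have h1 : χ (R⁻¹ • x) ≠ 0 := hx
        have h2 : R⁻¹ • x ∈ Function.support (χ : Euc d → ℝ) := h1
        rw [χ.support_eq] at h2
        have h3 : ‖R⁻¹ • x‖ < 2 := by simpa [hχ_def] using h2
        rw [norm_smul, norm_inv, Real.norm_of_nonneg hR.le] at h3
        have h4 : ‖x‖ < 2 * R := by
          rw [inv_mul_lt_iff₀ hR] at h3
          linarith [h3]
        simpa [Metric.mem_closedBall, dist_zero_right] using h4.le
      have hw_cs : HasCompactSupport w := by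
        have : w = vn * χR := rfl
        rw [this]
        exact hχR_cs.mul_left
      -- Sobolev inequality for w
      have hfr : Module.finrank ℝ (Euc d) = d := finrank_euclideanSpace_fin
      have hn0 : 0 < Module.finrank ℝ (Euc d) := by rw [hfr]; omega
      have h1r : (1 : ℝ≥0) ≤ r.toNNReal := by
        rw [← Real.toNNReal_one]
        exact Real.toNNReal_mono hr1
      have hp' : ((rs.toNNReal : ℝ))⁻¹ = (r.toNNReal : ℝ)⁻¹ - (Module.finrank ℝ (Euc d) : ℝ)⁻¹ := by
        rw [Real.coe_toNNReal _ hrs0.le, Real.coe_toNNReal _ hr0.le, hfr]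
        exact hrs
      have hsob := eLpNorm_le_eLpNorm_fderiv_of_eq (μ := (volume : Measure (Euc d)))
        hwcd hw_cs h1r hn0 hp'
      have hofr : ENNReal.ofReal r = ((r.toNNReal : ℝ≥0) : ℝ≥0∞) := rfl
      have hofrs : ENNReal.ofReal rs = ((rs.toNNReal : ℝ≥0) : ℝ≥0∞) := rfl
      -- decompose fderiv w
      set A : Euc d → (Euc d →L[ℝ] ℝ) := fun x => χR x • fderiv ℝ vn x with hA_def
      set Bf : Euc d → (Euc d →L[ℝ] ℝ) := fun x => vn x • fderiv ℝ χR x with hBf_def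
      have hfdw : fderiv ℝ w = fun x => Bf x + A x := by
        funext x
        have h1 : HasFDerivAt w (vn x • fderiv ℝ χR x + χR x • fderiv ℝ vn x) x :=
          ((hvncd.differentiable one_ne_zero x).hasFDerivAt).mul
            ((hχRcd.differentiable one_ne_zero x).hasFDerivAt)
        exact h1.fderiv
      have hAm : AEStronglyMeasurable A volume :=
        (hχRcd.continuous.smul (hvncd.continuous_fderiv one_ne_zero)).aestronglyMeasurable
      have hBm : AEStronglyMeasurable Bf volume :=
        (hvncd.continuous.smul (hχRcd.continuous_fderiv one_ne_zero)).aestronglyMeasurable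
      have hsplit : eLpNorm (fderiv ℝ w) (ENNReal.ofReal r) volume
          ≤ eLpNorm Bf (ENNReal.ofReal r) volume + eLpNorm A (ENNReal.ofReal r) volume := by
        rw [hfdw]
        have : (fun x => Bf x + A x) = Bf + A := rfl
        rw [this]
        exact eLpNorm_add_le (ε := Euc d →L[ℝ] ℝ) hBm hAm (by
          rw [hofr]
          exact_mod_cast h1r)
      have hA_le : eLpNorm A (ENNReal.ofReal r) volume ≤ B := by
        apply eLpNorm_mono
        intro x
        refine le_trans (ContinuousLinearMap.opNorm_smul_le _ _) ?_
        calc ‖χR x‖ * ‖fderiv ℝ vn x‖ ≤ 1 * ‖fderiv ℝ v x‖ := by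
              refine mul_le_mul ?_ (hDvn_norm x) (norm_nonneg _) zero_le_one
              rw [Real.norm_of_nonneg χ.nonneg]
              exact χ.le_one
          _ = ‖fderiv ℝ v x‖ := one_mul _
      have hB_le : eLpNorm Bf (ENNReal.ofReal r) volume
          ≤ ENNReal.ofReal (M / R) * c1 := by
        have h1 : ∀ᵐ x ∂(volume : Measure (Euc d)),
            ‖Bf x‖ ≤ ((M / R).toNNReal : ℝ) * ‖vn x‖ := by
          refine Eventually.of_forall fun x => ?_
          refine le_trans (ContinuousLinearMap.opNorm_smul_le _ _) ?_
          rw [Real.coe_toNNReal _ (by positivity), mul_comm]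
          exact mul_le_mul_of_nonneg_right (hχR_norm x) (norm_nonneg _)
        have h2 := eLpNorm_le_nnreal_smul_eLpNorm_of_ae_le_mul
          (h1.mono fun x hx => (by rw [← NNReal.coe_le_coe]; exact hx)) (ENNReal.ofReal r)
        calc eLpNorm Bf (ENNReal.ofReal r) volume
            ≤ ((M / R).toNNReal : ℝ≥0∞) * eLpNorm vn (ENNReal.ofReal r) volume := h2
          _ ≤ ENNReal.ofReal (M / R) * c1 := by
              refine mul_le_mul' ?_ hvn_r
              rfl
      -- ball indicator ≤ w
      have hind : ∀ x : Euc d,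
          ((Metric.ball (0 : Euc d) R).indicator (fun x => (‖vn x‖₊ : ℝ≥0∞) ^ rs)) x
            = ((‖(Metric.ball (0 : Euc d) R).indicator vn x‖₊ : ℝ≥0∞)) ^ rs := by
        intro x
        by_cases hx : x ∈ Metric.ball (0 : Euc d) R
        · rw [Set.indicator_of_mem hx, Set.indicator_of_mem hx]
        · rw [Set.indicator_of_notMem hx, Set.indicator_of_notMem hx]
          simp [ENNReal.zero_rpow_of_pos hrs0]
      have hle_w : ∀ x : Euc d, ‖(Metric.ball (0 : Euc d) R).indicator vn x‖ ≤ ‖w x‖ := by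
        intro x
        by_cases hx : x ∈ Metric.ball (0 : Euc d) R
        · rw [Set.indicator_of_mem hx]
          have hmem : R⁻¹ • x ∈ Metric.closedBall (0 : Euc d) χ.rIn := by
            have h1 : ‖x‖ < R := by simpa [Metric.mem_ball, dist_zero_right] using hx
            have h2 : ‖R⁻¹ • x‖ ≤ 1 := by
              rw [norm_smul, norm_inv, Real.norm_of_nonneg hR.le]
              calc R⁻¹ * ‖x‖ ≤ R⁻¹ * R :=
                    mul_le_mul_of_nonneg_left h1.le (by positivity)
                _ = 1 := by field_simp
            simpa [Metric.mem_closedBall, dist_zero_right, hχ_def] using h2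
          have hone : χR x = 1 := χ.one_of_mem_closedBall hmem
          rw [hw_def]
          simp only
          rw [hone, mul_one]
        · rw [Set.indicator_of_notMem hx]
          simp
      -- combine
      have hu_le : eLpNorm ((Metric.ball (0 : Euc d) R).indicator vn) (ENNReal.ofReal rs) volume
          ≤ Cd * (B + ENNReal.ofReal (M / R) * c1) := by
        calc eLpNorm ((Metric.ball (0 : Euc d) R).indicator vn) (ENNReal.ofReal rs) volume
            ≤ eLpNorm w (ENNReal.ofReal rs) volume := eLpNorm_mono hle_w
          _ ≤ ((SNormLESNormFDerivOfEqConst ℝ (volume : Measure (Euc d)) r.toNNReal : ℝ≥0) : ℝ≥0∞)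
              * eLpNorm (fderiv ℝ w) (ENNReal.ofReal r) volume := by
              rw [hofrs, hofr]; exact hsob
          _ ≤ Cd * eLpNorm (fderiv ℝ w) (ENNReal.ofReal r) volume := by
              refine mul_le_mul_left ?_ _
              rw [hCd_def, hCnn_def]
              exact_mod_cast le_self_add
          _ ≤ Cd * (eLpNorm Bf (ENNReal.ofReal r) volume + eLpNorm A (ENNReal.ofReal r) volume) :=
              mul_le_mul_right hsplit _
          _ ≤ Cd * (ENNReal.ofReal (M / R) * c1 + B) :=
              mul_le_mul_right (add_le_add hB_le hA_le) _
          _ = Cd * (B + ENNReal.ofReal (M / R) * c1) := by rw [add_comm]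
      -- convert to lintegral form
      have heq : ∫⁻ x, ((Metric.ball (0 : Euc d) R).indicator
            (fun x => (‖vn x‖₊ : ℝ≥0∞) ^ rs)) x ∂volume
          = (eLpNorm ((Metric.ball (0 : Euc d) R).indicator vn) (ENNReal.ofReal rs) volume) ^ rs := by
        rw [eLpNorm_eq_lintegral_rpow_enorm_toReal (by simp [ENNReal.ofReal_eq_zero]; linarith)
          ENNReal.ofReal_ne_top, ENNReal.toReal_ofReal hrs0.le]
        rw [← ENNReal.rpow_mul, one_div, inv_mul_cancel₀ hrs0.ne', ENNReal.rpow_one]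
        apply lintegral_congr
        intro x
        exact hind x
      rw [heq]
      exact ENNReal.rpow_le_rpow hu_le hrs0.le
    -- limit in j : monotone convergence
    have hmeasg : ∀ j : ℕ, Measurable fun x =>
        ((Metric.ball (0 : Euc d) ((j : ℝ) + 1)).indicator
          (fun x => (‖vn x‖₊ : ℝ≥0∞) ^ rs)) x := by
      intro j
      apply Measurable.indicator _ Metric.isOpen_ball.measurableSet
      exact (ENNReal.continuous_rpow_const.comp
        (ENNReal.continuous_coe.comp hvncd.continuous.nnnorm)).measurable
    have hmono : Monotone fun j : ℕ => (Metric.ball (0 : Euc d) ((j : ℝ) + 1)).indicator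
        (fun x => (‖vn x‖₊ : ℝ≥0∞) ^ rs) := by
      intro i j hij
      apply Set.indicator_le_indicator_of_subset
      · refine Metric.ball_subset_ball ?_
        have : (i : ℝ) ≤ (j : ℝ) := Nat.cast_le.mpr hij
        linarith
      · intro x; exact zero_le
    have hsup_pt : ∀ x : Euc d, (⨆ j : ℕ, ((Metric.ball (0 : Euc d) ((j : ℝ) + 1)).indicator
        (fun x => (‖vn x‖₊ : ℝ≥0∞) ^ rs)) x) = (‖vn x‖₊ : ℝ≥0∞) ^ rs := by
      intro x
      apply le_antisymm
      · exact iSup_le fun j => Set.indicator_le_self _ _ x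
      · have hx : x ∈ Metric.ball (0 : Euc d) ((⌈‖x‖⌉₊ : ℝ) + 1) := by
          rw [Metric.mem_ball, dist_zero_right]
          calc ‖x‖ ≤ (⌈‖x‖⌉₊ : ℝ) := Nat.le_ceil _
            _ < (⌈‖x‖⌉₊ : ℝ) + 1 := by linarith
        refine le_iSup_of_le ⌈‖x‖⌉₊ ?_
        rw [Set.indicator_of_mem hx]
    have hlim : ∫⁻ x, (‖vn x‖₊ : ℝ≥0∞) ^ rs ∂volume
        = ⨆ j : ℕ, ∫⁻ x, ((Metric.ball (0 : Euc d) ((j : ℝ) + 1)).indicator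
            (fun x => (‖vn x‖₊ : ℝ≥0∞) ^ rs)) x ∂volume := by
      rw [← lintegral_iSup hmeasg hmono]
      apply lintegral_congr
      intro x
      exact (hsup_pt x).symm
    -- limits of bounds
    have htendI : Tendsto (fun j : ℕ => ∫⁻ x, ((Metric.ball (0 : Euc d) ((j : ℝ) + 1)).indicator
          (fun x => (‖vn x‖₊ : ℝ≥0∞) ^ rs)) x ∂volume) atTop
        (𝓝 (⨆ j : ℕ, ∫⁻ x, ((Metric.ball (0 : Euc d) ((j : ℝ) + 1)).indicator
          (fun x => (‖vn x‖₊ : ℝ≥0∞) ^ rs)) x ∂volume)) :=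
      tendsto_atTop_iSup fun i j hij => lintegral_mono fun x => hmono hij x
    have htendB : Tendsto (fun j : ℕ =>
        (Cd * (B + ENNReal.ofReal (M / ((j : ℝ) + 1)) * c1)) ^ rs) atTop
        (𝓝 ((Cd * (B + 0 * c1)) ^ rs)) := by
      have t0 : Tendsto (fun j : ℕ => M / ((j : ℝ) + 1)) atTop (𝓝 0) := by
        have := tendsto_one_div_add_atTop_nhds_zero_nat.const_mul M
        simpa [div_eq_mul_inv, one_div, mul_zero] using this
      have t1 : Tendsto (fun j : ℕ => ENNReal.ofReal (M / ((j : ℝ) + 1))) atTop (𝓝 0) := by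
        have := (ENNReal.continuous_ofReal.tendsto 0).comp t0
        simpa [Function.comp_def] using this
      have t2 : Tendsto (fun j : ℕ => ENNReal.ofReal (M / ((j : ℝ) + 1)) * c1) atTop
          (𝓝 (0 * c1)) := ENNReal.Tendsto.mul_const t1 (Or.inr hc1_top)
      have t3 : Tendsto (fun j : ℕ => B + ENNReal.ofReal (M / ((j : ℝ) + 1)) * c1) atTop
          (𝓝 (B + 0 * c1)) := tendsto_const_nhds.add t2
      have t4 : Tendsto (fun j : ℕ => Cd * (B + ENNReal.ofReal (M / ((j : ℝ) + 1)) * c1)) atTop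
          (𝓝 (Cd * (B + 0 * c1))) := ENNReal.Tendsto.const_mul t3 (Or.inr hCd_top)
      exact (ENNReal.continuous_rpow_const.tendsto _).comp t4
    have hfinal := le_of_tendsto_of_tendsto' htendI htendB keyR
    rw [hlim]
    simpa using hfinal
  -- Fatou over n
  have hmeasn : ∀ n : ℕ, Measurable fun x : Euc d =>
      (‖((n : ℝ) + 1) * arctan (v x / ((n : ℝ) + 1))‖₊ : ℝ≥0∞) ^ rs := by
    intro n
    have hcont : Continuous fun x : Euc d => ((n : ℝ) + 1) * arctan (v x / ((n : ℝ) + 1)) :=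
      continuous_const.mul (Real.continuous_arctan.comp (hvcont.div_const _))
    exact (ENNReal.continuous_rpow_const.comp
      (ENNReal.continuous_coe.comp hcont.nnnorm)).measurable
  have hpt : ∀ x : Euc d, Tendsto (fun n : ℕ =>
      (‖((n : ℝ) + 1) * arctan (v x / ((n : ℝ) + 1))‖₊ : ℝ≥0∞) ^ rs) atTop
      (𝓝 ((‖v x‖₊ : ℝ≥0∞) ^ rs)) := by
    intro x
    have hcont : Continuous fun t : ℝ => ((‖t‖₊ : ℝ≥0∞)) ^ rs :=
      ENNReal.continuous_rpow_const.comp (ENNReal.continuous_coe.comp continuous_nnnorm)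
    exact (hcont.tendsto _).comp (tendsto_scaled_arctan (v x))
  have hFatou : ∫⁻ x, (‖v x‖₊ : ℝ≥0∞) ^ rs ∂volume ≤ (Cd * B) ^ rs := by
    calc ∫⁻ x, (‖v x‖₊ : ℝ≥0∞) ^ rs ∂volume
        = ∫⁻ x, liminf (fun n : ℕ =>
            (‖((n : ℝ) + 1) * arctan (v x / ((n : ℝ) + 1))‖₊ : ℝ≥0∞) ^ rs) atTop ∂volume := by
          apply lintegral_congr
          intro x
          exact ((hpt x).liminf_eq).symm
      _ ≤ liminf (fun n : ℕ => ∫⁻ x,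
            (‖((n : ℝ) + 1) * arctan (v x / ((n : ℝ) + 1))‖₊ : ℝ≥0∞) ^ rs ∂volume) atTop :=
          lintegral_liminf_le hmeasn
      _ ≤ liminf (fun _ : ℕ => (Cd * B) ^ rs) atTop :=
          liminf_le_liminf (Eventually.of_forall key)
      _ = (Cd * B) ^ rs := liminf_const _
  rw [eLpNorm_eq_lintegral_rpow_enorm_toReal (by simp [ENNReal.ofReal_eq_zero]; linarith)
    ENNReal.ofReal_ne_top, ENNReal.toReal_ofReal hrs0.le]
  calc (∫⁻ x, (‖v x‖₊ : ℝ≥0∞) ^ rs ∂volume) ^ (1 / rs)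
      ≤ ((Cd * B) ^ rs) ^ (1 / rs) := ENNReal.rpow_le_rpow hFatou (by positivity)
    _ = Cd * B := by
        rw [← ENNReal.rpow_mul, mul_one_div, div_self hrs0.ne', ENNReal.rpow_one]

/-- **Homogeneous Gagliardo–Nirenberg–Sobolev inequality, first-order case**.
Under the stated exponent relations there is a constant `C = C(p,q,r,k,d)` such that
every nonnegative `C¹` function `f ∈ L^p ∩ L^q` with `∇(f^k) ∈ L^r` satisfies
`‖f‖_q ≤ C ‖f‖_p^{α₂} ‖∇(f^k)‖_r^{α₁}`. -/
theorem gagliardo_nirenberg_sobolev_homogeneous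
    (d : ℕ) (hd : 2 ≤ d) (p q r k : ℝ)
    (hr1 : 1 ≤ r) (hrd : r < (d : ℝ)) (hk : 1 ≤ k)
    (hp1 : 1 ≤ p) (hprk : p ≤ r * k) (hrkd : r * k ≤ (d : ℝ) * k)
    (hkq : k < q) (hq : q < r * k * (d : ℝ) / ((d : ℝ) - r))
    (hcond : 1 / r - k / q - 1 / (d : ℝ) < 0)
    (α₁ α₂ : ℝ) (hα₁ : 0 < α₁) (hα₂ : 0 < α₂)
    (hsum : 1 = α₁ * k + α₂)
    (hbal : 1 / q - 1 / p = α₁ * (-1 / (d : ℝ) + 1 / r - k / p)) :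
    ∃ C > (0 : ℝ), ∀ f : Euc d → ℝ, (∀ x, 0 ≤ f x) → ContDiff ℝ 1 f →
      MemLp f (ENNReal.ofReal p) volume → MemLp f (ENNReal.ofReal q) volume →
      MemLp (fun x => gradient (fun y => f y ^ k) x) (ENNReal.ofReal r) volume →
      eLpNorm f (ENNReal.ofReal q) volume
        ≤ ENNReal.ofReal C * eLpNorm f (ENNReal.ofReal p) volume ^ α₂ *
            eLpNorm (fun x => gradient (fun y => f y ^ k) x) (ENNReal.ofReal r) volume
              ^ α₁ := by
  -- numerical preliminaries
  have hd2 : (2 : ℝ) ≤ (d : ℝ) := by exact_mod_cast hd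
  have hd0 : (0 : ℝ) < (d : ℝ) := by linarith
  have hr0 : (0 : ℝ) < r := by linarith
  have hk0 : (0 : ℝ) < k := by linarith
  have hp0 : (0 : ℝ) < p := by linarith
  have hq0 : (0 : ℝ) < q := by linarith
  have hinv : (0 : ℝ) < r⁻¹ - (d : ℝ)⁻¹ := by
    rw [sub_pos]
    have := one_div_lt_one_div_of_lt hr0 hrd
    simpa [one_div] using this
  set ρ : ℝ := (r⁻¹ - (d : ℝ)⁻¹)⁻¹ with hρ_def
  have hρ0 : 0 < ρ := inv_pos.mpr hinv
  have hρinv : ρ⁻¹ = r⁻¹ - (d : ℝ)⁻¹ := by rw [hρ_def, inv_inv]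
  set s : ℝ := k * ρ with hs_def
  have hs0 : 0 < s := by positivity
  set θ : ℝ := α₁ * k with hθ_def
  have hθ0 : 0 < θ := by positivity
  have hθ1 : θ < 1 := by rw [hθ_def]; linarith
  have h1θ : 1 - θ = α₂ := by rw [hθ_def]; linarith
  have hpq : 1 / q = (1 - θ) / p + θ / s := by
    have h1 : θ / s = α₁ * (r⁻¹ - (d : ℝ)⁻¹) := by
      rw [hθ_def, hs_def]
      rw [← hρinv]
      field_simp
    rw [h1, hθ_def]
    have hd0' : (d : ℝ) ≠ 0 := hd0.ne'
    have hr0' : r ≠ 0 := hr0.ne'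
    have e1 : r⁻¹ = 1 / r := (one_div r).symm
    have e2 : (d : ℝ)⁻¹ = 1 / (d : ℝ) := (one_div _).symm
    rw [e1, e2]
    linear_combination hbal
  -- the constant
  set Cnn : ℝ≥0 := SNormLESNormFDerivOfEqConst ℝ (volume : Measure (Euc d)) r.toNNReal + 1
    with hCnn_def
  have hCnn1 : (1 : ℝ≥0) ≤ Cnn := le_add_self
  have hCnn0 : (0 : ℝ) < (Cnn : ℝ) := by
    have : (1 : ℝ) ≤ (Cnn : ℝ) := by exact_mod_cast hCnn1
    linarith
  refine ⟨((Cnn : ℝ)) ^ α₁, by positivity, ?_⟩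
  intro f hf0 hfcd hfp hfq hgrad
  set v : Euc d → ℝ := fun y => f y ^ k with hv_def
  have hvcd : ContDiff ℝ 1 v := (contDiff_rpow_const' hk).comp hfcd
  -- norms
  set A : ℝ≥0∞ := eLpNorm f (ENNReal.ofReal p) volume with hA_def
  set Q : ℝ≥0∞ := eLpNorm f (ENNReal.ofReal q) volume with hQ_def
  set S : ℝ≥0∞ := eLpNorm f (ENNReal.ofReal s) volume with hS_def
  set B : ℝ≥0∞ := eLpNorm (fun x => gradient (fun y => f y ^ k) x) (ENNReal.ofReal r) volume
    with hB_def
  -- step 1 : interpolation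
  have hstep1 : Q ≤ A ^ α₂ * S ^ θ := by
    rw [← h1θ]
    exact eLpNorm_interp volume p q s θ hp0 hq0 hs0 hθ0 hθ1 hpq f
      hfcd.continuous.measurable.aemeasurable
  -- pointwise norm identities
  have hnn : ∀ x, (‖v x‖₊ : ℝ≥0∞) = (‖f x‖₊ : ℝ≥0∞) ^ k := by
    intro x
    rw [hv_def]
    simp only
    rw [nnnorm_rpow_of_nonneg (hf0 x), ENNReal.coe_rpow_of_nonneg _ hk0.le]
  -- finiteness of the p/k integral of v
  have hTfin : ∫⁻ x, (‖v x‖₊ : ℝ≥0∞) ^ (p / k) ∂(volume : Measure (Euc d)) < ⊤ := by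
    have hptw : ∀ x, (‖v x‖₊ : ℝ≥0∞) ^ (p / k) = (‖f x‖₊ : ℝ≥0∞) ^ p := by
      intro x
      rw [hnn x, ← ENNReal.rpow_mul]
      congr 1
      field_simp
    rw [lintegral_congr hptw]
    have h2 := hfp.2
    rw [eLpNorm_eq_lintegral_rpow_enorm_toReal (by simp [ENNReal.ofReal_eq_zero]; linarith)
      ENNReal.ofReal_ne_top, ENNReal.toReal_ofReal hp0.le] at h2
    have h3 : (0 : ℝ) < 1 / p := by positivity
    exact (ENNReal.rpow_lt_top_iff_of_pos h3).mp h2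
  -- step 2 : Sobolev
  have hsob := sobolev_noncompact d hd r (p / k) ρ hr1 hrd (by positivity)
    (by rw [div_le_iff₀ hk0]; linarith) hρinv v hvcd hTfin
  -- gradient vs fderiv
  have hBeq : B = eLpNorm (fderiv ℝ v) (ENNReal.ofReal r) volume := by
    apply eLpNorm_congr_norm_ae
    refine Eventually.of_forall fun x => ?_
    show ‖gradient (fun y => f y ^ k) x‖ = ‖fderiv ℝ v x‖
    rw [hv_def]
    exact (InnerProductSpace.toDual ℝ (Euc d)).symm.norm_map _
  -- S^k = eLpNorm v ρ
  have hSk : S ^ k = eLpNorm v (ENNReal.ofReal ρ) volume := by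
    rw [hS_def, eLpNorm_eq_lintegral_rpow_enorm_toReal (by simp [ENNReal.ofReal_eq_zero]; linarith)
      ENNReal.ofReal_ne_top, ENNReal.toReal_ofReal hs0.le,
      eLpNorm_eq_lintegral_rpow_enorm_toReal (by simp [ENNReal.ofReal_eq_zero]; linarith)
      ENNReal.ofReal_ne_top, ENNReal.toReal_ofReal hρ0.le]
    have hptw : ∀ x, ‖v x‖ₑ ^ ρ = ‖f x‖ₑ ^ s := by
      intro x
      show (‖v x‖₊ : ℝ≥0∞) ^ ρ = (‖f x‖₊ : ℝ≥0∞) ^ s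
      rw [hnn x, ← ENNReal.rpow_mul, hs_def]
    rw [lintegral_congr hptw, ← ENNReal.rpow_mul]
    congr 1
    rw [hs_def]
    field_simp
  -- assemble
  have hstep2 : S ^ θ ≤ ((Cnn : ℝ≥0∞)) ^ α₁ * B ^ α₁ := by
    have h1 : S ^ θ = (S ^ k) ^ α₁ := by
      rw [← ENNReal.rpow_mul, hθ_def, mul_comm]
    rw [h1, hSk]
    calc (eLpNorm v (ENNReal.ofReal ρ) volume) ^ α₁
        ≤ ((Cnn : ℝ≥0∞) * eLpNorm (fderiv ℝ v) (ENNReal.ofReal r) volume) ^ α₁ :=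
          ENNReal.rpow_le_rpow (by rw [hCnn_def]; exact hsob) hα₁.le
      _ = ((Cnn : ℝ≥0∞)) ^ α₁ * (eLpNorm (fderiv ℝ v) (ENNReal.ofReal r) volume) ^ α₁ :=
          ENNReal.mul_rpow_of_nonneg _ _ hα₁.le
      _ = ((Cnn : ℝ≥0∞)) ^ α₁ * B ^ α₁ := by rw [hBeq]
  have hC : ENNReal.ofReal ((Cnn : ℝ) ^ α₁) = ((Cnn : ℝ≥0∞)) ^ α₁ := by
    rw [← ENNReal.ofReal_rpow_of_pos hCnn0, ENNReal.ofReal_coe_nnreal]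
  calc Q ≤ A ^ α₂ * S ^ θ := hstep1
    _ ≤ A ^ α₂ * (((Cnn : ℝ≥0∞)) ^ α₁ * B ^ α₁) := mul_le_mul_right hstep2 _
    _ = ENNReal.ofReal ((Cnn : ℝ) ^ α₁) * A ^ α₂ * B ^ α₁ := by
        rw [hC]; ring
end
end

section
/- Let d ≥ 2, γ ∈ [d−1, d), and let g : ℝ^d → ℝ be locally integrable with |g(x)| ≤ A|x|^{−γ} for all |x| ≥ 1, for some constant A. Then there exists a constant C such that for every λ ≥ 1 and every nonnegative θ ∈ L¹(ℝ^d) ∩ L^∞(ℝ^d), the convolution bound ‖(λ^d g(λ·)) ∗ θ‖_{L^∞(ℝ^d)} ≤ C(1 + λ^{d−γ})(‖θ‖_{L^∞} + ‖θ‖_{L¹}) holds, where λ^d g(λ·) denotes the function y ↦ λ^d g(λy). -/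
open MeasureTheory Real
open scoped ENNReal

noncomputable section

lemma aux_transl (d : ℕ) (h : Euc d → ℝ≥0∞) (x : Euc d) :
    ∫⁻ y, h (x - y) = ∫⁻ y, h y := by
  calc ∫⁻ y, h (x - y) = ∫⁻ y, h ((MeasurableEquiv.subLeft x) y) := rfl
    _ = ∫⁻ y, h y ∂(Measure.map (MeasurableEquiv.subLeft x) volume) :=
        (lintegral_map_equiv h _).symm
    _ = ∫⁻ y, h y := by
        congr 1
        have : ⇑(MeasurableEquiv.subLeft x) = (fun t => x - t) := rfl
        rw [this]
        exact MeasureTheory.Measure.map_sub_left_eq_self volume x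

lemma aux_scale (d : ℕ) (h : Euc d → ℝ≥0∞) {lam : ℝ} (hlam : 0 < lam) :
    ∫⁻ z, h (lam • z) = ENNReal.ofReal (|(lam ^ d)⁻¹|) * ∫⁻ w, h w := by
  calc ∫⁻ z, h (lam • z)
      = ∫⁻ z, h ((MeasurableEquiv.smul₀ lam hlam.ne' : Euc d ≃ᵐ Euc d) z) := rfl
    _ = ∫⁻ w, h w ∂(Measure.map (MeasurableEquiv.smul₀ lam hlam.ne') volume) :=
        (lintegral_map_equiv h _).symm
    _ = ENNReal.ofReal (|(lam ^ d)⁻¹|) * ∫⁻ w, h w := by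
        rw [show (⇑(MeasurableEquiv.smul₀ lam hlam.ne' : Euc d ≃ᵐ Euc d)) = (lam • ·) from rfl,
          Measure.map_addHaar_smul volume hlam.ne', lintegral_smul_measure,
          finrank_euclideanSpace_fin, smul_eq_mul]

lemma aux_V1fin (d : ℕ) (hd : 1 ≤ d) {γ : ℝ} (hγ0 : 0 ≤ γ) (hγ2 : γ < d) :
    ∫⁻ w in Metric.closedBall (0 : Euc d) 1, ENNReal.ofReal (‖w‖ ^ (-γ)) < ⊤ := by
  classical
  haveI : Nontrivial (Euc d) := by
    refine ⟨⟨EuclideanSpace.single (⟨0, hd⟩ : Fin d) (1 : ℝ), 0, fun h => ?_⟩⟩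
    have := congrArg norm h
    simp [EuclideanSpace.norm_single] at this
  set b : ℝ := (2 : ℝ) ^ γ with hb
  have hb0 : 0 ≤ b := Real.rpow_nonneg (by norm_num) _
  set c : ℝ := b * (1 / 2 : ℝ) ^ d with hc
  have hc0 : 0 ≤ c := by positivity
  have hc1 : c < 1 := by
    rw [hc, one_div, inv_pow, mul_inv_lt_iff₀ (by positivity), one_mul, hb,
      ← Real.rpow_natCast (2 : ℝ) d]
    exact (Real.rpow_lt_rpow_left_iff one_lt_two).2 hγ2
  set f : Euc d → ℝ≥0∞ := fun w => ENNReal.ofReal (‖w‖ ^ (-γ)) with hf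
  set S : ℕ → Set (Euc d) :=
    fun n => Metric.closedBall 0 ((1 / 2 : ℝ) ^ n) \ Metric.closedBall 0 ((1 / 2 : ℝ) ^ (n + 1))
    with hSdef
  set V : ℝ≥0∞ := volume (Metric.ball (0 : Euc d) 1) with hV
  have hVfin : V < ⊤ := measure_ball_lt_top
  have hcover : Metric.closedBall (0 : Euc d) 1 ⊆ {0} ∪ ⋃ n, S n := by
    intro z hz
    rcases eq_or_ne z 0 with rfl | hz0
    · exact Or.inl rfl
    right
    have hzpos : 0 < ‖z‖ := norm_pos_iff.2 hz0
    have hz1 : ‖z‖ ≤ 1 := mem_closedBall_zero_iff.1 hz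
    have hex : ∃ n : ℕ, (1 / 2 : ℝ) ^ (n + 1) < ‖z‖ := by
      obtain ⟨n, hn⟩ := exists_pow_lt_of_lt_one hzpos (by norm_num : (1 / 2 : ℝ) < 1)
      exact ⟨n, lt_of_le_of_lt
        (pow_le_pow_of_le_one (by norm_num) (by norm_num) (by omega)) hn⟩
    set n := Nat.find hex with hn
    have h1 : (1 / 2 : ℝ) ^ (n + 1) < ‖z‖ := Nat.find_spec hex
    have h2 : ‖z‖ ≤ (1 / 2 : ℝ) ^ n := by
      rcases Nat.eq_zero_or_pos n with h0 | hpos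
      · rw [h0]; simpa using hz1
      · have hlt : n - 1 < n := Nat.sub_lt hpos one_pos
        have := Nat.find_min hex hlt
        rw [show n - 1 + 1 = n from Nat.succ_pred_eq_of_pos hpos] at this
        exact not_lt.1 this
    exact Set.mem_iUnion.2 ⟨n, mem_closedBall_zero_iff.2 h2,
      fun hmem => absurd (mem_closedBall_zero_iff.1 hmem) (not_le.2 h1)⟩
  have hterm : ∀ n : ℕ, ∫⁻ w in S n, f w ≤ ENNReal.ofReal b * ENNReal.ofReal c ^ n * V := by
    intro n
    have hmeasS : MeasurableSet (S n) :=
      measurableSet_closedBall.diff measurableSet_closedBall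
    have hpt : ∀ w ∈ S n, f w ≤ ENNReal.ofReal (b ^ (n + 1)) := by
      intro w hw
      have hlow : (1 / 2 : ℝ) ^ (n + 1) < ‖w‖ :=
        not_le.1 (fun hle => hw.2 (mem_closedBall_zero_iff.2 hle))
      have h1 : ‖w‖ ^ (-γ) ≤ ((1 / 2 : ℝ) ^ (n + 1)) ^ (-γ) :=
        Real.rpow_le_rpow_of_nonpos (by positivity) hlow.le (neg_nonpos.2 hγ0)
      have h2 : ((1 / 2 : ℝ) ^ (n + 1)) ^ (-γ) = b ^ (n + 1) := by
        rw [one_div, inv_pow, Real.inv_rpow (by positivity), Real.rpow_neg (by positivity),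
          inv_inv, ← Real.rpow_natCast (2 : ℝ) (n + 1), ← Real.rpow_mul (by norm_num),
          mul_comm, Real.rpow_mul (by norm_num), hb, Real.rpow_natCast]
      exact ENNReal.ofReal_le_ofReal (h1.trans_eq h2)
    calc ∫⁻ w in S n, f w ≤ ∫⁻ _ in S n, ENNReal.ofReal (b ^ (n + 1)) :=
          setLIntegral_mono' hmeasS hpt
      _ = ENNReal.ofReal (b ^ (n + 1)) * volume (S n) := setLIntegral_const _ _
      _ ≤ ENNReal.ofReal (b ^ (n + 1)) *
            (ENNReal.ofReal (((1 / 2 : ℝ) ^ n) ^ d) * V) := by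
          gcongr
          calc volume (S n) ≤ volume (Metric.closedBall (0 : Euc d) ((1 / 2 : ℝ) ^ n)) :=
                measure_mono Set.diff_subset
            _ = ENNReal.ofReal (((1 / 2 : ℝ) ^ n) ^ d) * V := by
                rw [Measure.addHaar_closedBall volume 0 (by positivity),
                  finrank_euclideanSpace_fin]
      _ = ENNReal.ofReal b * ENNReal.ofReal c ^ n * V := by
          rw [← mul_assoc, ← ENNReal.ofReal_mul (by positivity),
            ← ENNReal.ofReal_pow hc0, ← ENNReal.ofReal_mul hb0]
          congr 2
          rw [hc, mul_pow, show ((1 / 2 : ℝ) ^ n) ^ d = ((1 / 2 : ℝ) ^ d) ^ n from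
            pow_right_comm _ _ _]
          ring
  calc ∫⁻ w in Metric.closedBall (0 : Euc d) 1, f w
      ≤ ∫⁻ w in ({0} ∪ ⋃ n, S n : Set (Euc d)), f w := lintegral_mono_set hcover
    _ ≤ (∫⁻ w in ({0} : Set (Euc d)), f w) + ∫⁻ w in (⋃ n, S n), f w :=
        lintegral_union_le _ _ _
    _ ≤ 0 + ∑' n, ∫⁻ w in S n, f w := by
        gcongr
        · exact (setLIntegral_measure_zero _ _ (measure_singleton 0)).le
        · exact lintegral_iUnion_le _ _
    _ ≤ 0 + ∑' n : ℕ, ENNReal.ofReal b * ENNReal.ofReal c ^ n * V :=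
        add_le_add le_rfl (ENNReal.tsum_le_tsum hterm)
    _ = ENNReal.ofReal b * (1 - ENNReal.ofReal c)⁻¹ * V := by
        rw [zero_add, ENNReal.tsum_mul_right, ENNReal.tsum_mul_left, ENNReal.tsum_geometric]
    _ < ⊤ := by
        refine ENNReal.mul_lt_top (ENNReal.mul_lt_top ENNReal.ofReal_lt_top ?_) hVfin
        rw [ENNReal.inv_lt_top]
        exact tsub_pos_of_lt (ENNReal.ofReal_lt_one.2 hc1)

/-- **Uniform bound for convolution with the rescaled kernel**.  If `g` is locally
integrable with `|g(x)| ≤ A |x|^{-γ}` for `|x| ≥ 1` and `γ ∈ [d-1, d)`, then there is `C`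
such that for every `λ ≥ 1` and nonnegative `θ ∈ L¹ ∩ L^∞`,
`‖(λ^d g(λ·)) ∗ θ‖_∞ ≤ C (1 + λ^{d-γ}) (‖θ‖_∞ + ‖θ‖₁)`. -/
theorem rescaled_kernel_conv_bound
    (d : ℕ) (hd : 2 ≤ d) (g : Euc d → ℝ) (A γ : ℝ)
    (hγ1 : (d : ℝ) - 1 ≤ γ) (hγ2 : γ < (d : ℝ))
    (hloc : LocallyIntegrable g volume)
    (hg : ∀ x : Euc d, 1 ≤ ‖x‖ → |g x| ≤ A * ‖x‖ ^ (-γ)) :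
    ∃ C : ℝ, ∀ lam : ℝ, 1 ≤ lam → ∀ θ : Euc d → ℝ, (∀ x, 0 ≤ θ x) →
      Integrable θ volume → MemLp θ ⊤ volume →
      ∀ x : Euc d,
        |∫ y, lam ^ (d : ℝ) * g (lam • (x - y)) * θ y|
          ≤ C * (1 + lam ^ ((d : ℝ) - γ)) *
              ((eLpNorm θ ⊤ volume).toReal + ∫ y, θ y) := by
  classical
  have hd2 : (2 : ℝ) ≤ (d : ℝ) := by exact_mod_cast hd
  have hγ0 : 0 < γ := by linarith
  have hA : 0 ≤ A := by
    have hx : ‖(EuclideanSpace.single (⟨0, by omega⟩ : Fin d) (1 : ℝ))‖ = 1 := by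
      simp [EuclideanSpace.norm_single]
    have h := hg _ hx.ge
    rw [hx, Real.one_rpow, mul_one] at h
    exact le_trans (abs_nonneg _) h
  set V₀ : ℝ≥0∞ := ∫⁻ w in Metric.closedBall (0 : Euc d) 1, ENNReal.ofReal |g w| with hV₀
  set V₁ : ℝ≥0∞ := ∫⁻ w in Metric.closedBall (0 : Euc d) 1, ENNReal.ofReal (‖w‖ ^ (-γ))
    with hV₁
  have hV₀fin : V₀ ≠ ⊤ := by
    have hint : IntegrableOn g (Metric.closedBall 0 1) volume :=
      hloc.integrableOn_isCompact (isCompact_closedBall 0 1)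
    have h2 := hint.2
    rw [HasFiniteIntegral] at h2
    rw [hV₀]
    simp_rw [← Real.enorm_eq_ofReal_abs]
    exact h2.ne
  have hV₁fin : V₁ ≠ ⊤ := (aux_V1fin d (by omega) hγ0.le hγ2).ne
  refine ⟨V₀.toReal + A * V₁.toReal + A, ?_⟩
  intro lam hlam θ hθ0 hθint hθtop x
  have hlam0 : 0 < lam := lt_of_lt_of_le one_pos hlam
  set lam' : ℝ := lam ^ ((d : ℝ) - γ) with hlam'
  have hlam'0 : 0 ≤ lam' := Real.rpow_nonneg hlam0.le _
  set M : ℝ≥0∞ := eLpNorm θ ⊤ volume with hM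
  have hMfin : M ≠ ⊤ := hθtop.2.ne
  set m : ℝ := M.toReal with hm
  have hm0 : 0 ≤ m := ENNReal.toReal_nonneg
  set t : ℝ := ∫ y, θ y with ht
  have ht0 : 0 ≤ t := integral_nonneg hθ0
  set C : ℝ := V₀.toReal + A * V₁.toReal + A with hC
  have hv₀ : 0 ≤ V₀.toReal := ENNReal.toReal_nonneg
  have hv₁ : 0 ≤ V₁.toReal := ENNReal.toReal_nonneg
  have hC0 : 0 ≤ C := by positivity
  have hRHS0 : 0 ≤ C * (1 + lam') * (m + t) := by positivity
  rw [← ENNReal.ofReal_le_ofReal_iff hRHS0]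
  set φ : Euc d → ℝ≥0∞ := fun z => ENNReal.ofReal (lam ^ (d : ℝ) * |g (lam • z)|) with hφ
  have hrd0 : (0:ℝ) ≤ lam ^ (d : ℝ) := Real.rpow_nonneg hlam0.le _
  have hφT : ∀ y : Euc d, ENNReal.ofReal |lam ^ (d : ℝ) * g (lam • (x - y)) * θ y|
      = φ (x - y) * ENNReal.ofReal (θ y) := by
    intro y
    rw [abs_mul, abs_mul, abs_of_nonneg hrd0, abs_of_nonneg (hθ0 y),
      ENNReal.ofReal_mul (by positivity)]
  have step1 : ENNReal.ofReal |∫ y, lam ^ (d : ℝ) * g (lam • (x - y)) * θ y|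
      ≤ ∫⁻ y, φ (x - y) * ENNReal.ofReal (θ y) := by
    calc ENNReal.ofReal |∫ y, lam ^ (d : ℝ) * g (lam • (x - y)) * θ y|
        = (‖∫ y, lam ^ (d : ℝ) * g (lam • (x - y)) * θ y‖₊ : ℝ≥0∞) :=
          (Real.enorm_eq_ofReal_abs _).symm
      _ ≤ ∫⁻ y, (‖lam ^ (d : ℝ) * g (lam • (x - y)) * θ y‖₊ : ℝ≥0∞) :=
          enorm_integral_le_lintegral_enorm _
      _ = ∫⁻ y, φ (x - y) * ENNReal.ofReal (θ y) := by
          simp_rw [← enorm_eq_nnnorm, Real.enorm_eq_ofReal_abs, hφT]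
  set S : Set (Euc d) := Metric.closedBall x 1 with hSdef
  have hS : MeasurableSet S := measurableSet_closedBall
  -- Pointwise bound valid as soon as `1 ≤ ‖lam • z‖`.
  have hφbound : ∀ z : Euc d, 1 ≤ ‖lam • z‖ →
      φ z ≤ ENNReal.ofReal (A * lam') * ENNReal.ofReal (‖z‖ ^ (-γ)) := by
    intro z hz
    have hgz := hg _ hz
    have hnz : 0 < ‖z‖ := by
      by_contra hcon
      have h0 : z = 0 := norm_le_zero_iff.1 (not_lt.1 hcon)
      rw [h0, smul_zero, norm_zero] at hz
      linarith
    have hns : ‖lam • z‖ = lam * ‖z‖ := by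
      rw [norm_smul, Real.norm_eq_abs, abs_of_pos hlam0]
    have hsplit : ‖lam • z‖ ^ (-γ) = lam ^ (-γ) * ‖z‖ ^ (-γ) := by
      rw [hns, Real.mul_rpow hlam0.le (norm_nonneg z)]
    have key : lam ^ (d : ℝ) * |g (lam • z)| ≤ A * lam' * ‖z‖ ^ (-γ) := by
      have h1 : lam ^ (d : ℝ) * |g (lam • z)| ≤ lam ^ (d : ℝ) * (A * (lam ^ (-γ) * ‖z‖ ^ (-γ)))
          := by
        have := hgz
        rw [hsplit] at this
        exact mul_le_mul_of_nonneg_left (by linarith [this]) hrd0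
      have h2 : lam ^ (d : ℝ) * lam ^ (-γ) = lam' := by
        rw [hlam', ← Real.rpow_add hlam0, sub_eq_add_neg]
      calc lam ^ (d : ℝ) * |g (lam • z)| ≤ lam ^ (d : ℝ) * (A * (lam ^ (-γ) * ‖z‖ ^ (-γ))) := h1
        _ = A * (lam ^ (d : ℝ) * lam ^ (-γ)) * ‖z‖ ^ (-γ) := by ring
        _ = A * lam' * ‖z‖ ^ (-γ) := by rw [h2]
    calc φ z = ENNReal.ofReal (lam ^ (d : ℝ) * |g (lam • z)|) := rfl
      _ ≤ ENNReal.ofReal (A * lam' * ‖z‖ ^ (-γ)) := ENNReal.ofReal_le_ofReal key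
      _ = ENNReal.ofReal (A * lam') * ENNReal.ofReal (‖z‖ ^ (-γ)) := by
          rw [ENNReal.ofReal_mul (by positivity)]
  -- the near part
  have hnear : ∫⁻ y in S, φ (x - y) * ENNReal.ofReal (θ y)
      ≤ (V₀ + ENNReal.ofReal (A * lam') * V₁) * M := by
    have h1 : ∫⁻ y in S, φ (x - y) * ENNReal.ofReal (θ y) ≤ ∫⁻ y in S, φ (x - y) * M := by
      apply lintegral_mono_ae
      filter_upwards [ae_restrict_of_ae (ae_le_eLpNormEssSup (f := θ) (μ := volume))] with y hy
      refine mul_le_mul_right ?_ _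
      rw [← Real.enorm_eq_ofReal (hθ0 y), hM, eLpNorm_exponent_top]
      exact hy
    have h2 : ∫⁻ y in S, φ (x - y) * M = (∫⁻ y in S, φ (x - y)) * M :=
      lintegral_mul_const' M _ hMfin
    have h3 : ∫⁻ y in S, φ (x - y) = ∫⁻ z in Metric.closedBall (0 : Euc d) 1, φ z := by
      rw [← lintegral_indicator hS, ← lintegral_indicator
        (measurableSet_closedBall (x := (0 : Euc d)) (ε := 1))]
      have hind : ∀ y : Euc d, S.indicator (fun y => φ (x - y)) y
          = (Metric.closedBall (0 : Euc d) 1).indicator φ (x - y) := by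
        intro y
        have hmem : y ∈ S ↔ (x - y) ∈ Metric.closedBall (0 : Euc d) 1 := by
          rw [hSdef, Metric.mem_closedBall, mem_closedBall_zero_iff, ← dist_eq_norm, dist_comm]
        by_cases hy : y ∈ S
        · rw [Set.indicator_of_mem hy, Set.indicator_of_mem (hmem.1 hy)]
        · rw [Set.indicator_of_notMem hy, Set.indicator_of_notMem (fun hc => hy (hmem.2 hc))]
      simp_rw [hind]
      exact aux_transl d _ x
    have h4 : ∫⁻ z in Metric.closedBall (0 : Euc d) 1, φ z
        ≤ V₀ + ENNReal.ofReal (A * lam') * V₁ := by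
      have hsub : Metric.closedBall (0 : Euc d) 1 ⊆ Metric.closedBall 0 (1 / lam) ∪
          (Metric.closedBall 0 1 \ Metric.closedBall 0 (1 / lam)) := by
        intro z hz
        by_cases h : z ∈ Metric.closedBall (0 : Euc d) (1 / lam)
        · exact Or.inl h
        · exact Or.inr ⟨hz, h⟩
      have hc1 : ∫⁻ z in Metric.closedBall (0 : Euc d) (1 / lam), φ z = V₀ := by
        -- change of variables
        set h : Euc d → ℝ≥0∞ :=
          (Metric.closedBall (0 : Euc d) 1).indicator (fun w => ENNReal.ofReal |g w|) with hh
        have hcv : ∫⁻ z, h (lam • z) = ENNReal.ofReal (|(lam ^ d)⁻¹|) * V₀ := by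
          rw [aux_scale d h hlam0]
          congr 1
          rw [hh, lintegral_indicator (measurableSet_closedBall (x := (0 : Euc d)) (ε := 1))]
      -- identify the left side with a set integral
        have hind2 : ∀ z : Euc d, h (lam • z)
            = (Metric.closedBall (0 : Euc d) (1 / lam)).indicator
                (fun z => ENNReal.ofReal |g (lam • z)|) z := by
          intro z
          have hmem : (lam • z) ∈ Metric.closedBall (0 : Euc d) 1 ↔
              z ∈ Metric.closedBall (0 : Euc d) (1 / lam) := by
            rw [mem_closedBall_zero_iff, mem_closedBall_zero_iff, norm_smul,
              Real.norm_eq_abs, abs_of_pos hlam0, ← le_div_iff₀' hlam0]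
          by_cases hz : z ∈ Metric.closedBall (0 : Euc d) (1 / lam)
          · rw [hh, Set.indicator_of_mem (hmem.2 hz), Set.indicator_of_mem hz]
          · rw [hh, Set.indicator_of_notMem (fun hc => hz (hmem.1 hc)),
              Set.indicator_of_notMem hz]
        have hset : ∫⁻ z in Metric.closedBall (0 : Euc d) (1 / lam),
            ENNReal.ofReal |g (lam • z)| = ENNReal.ofReal (|(lam ^ d)⁻¹|) * V₀ := by
          rw [← lintegral_indicator (measurableSet_closedBall
            (x := (0 : Euc d)) (ε := 1 / lam))]
          rw [← hcv]
          exact lintegral_congr fun z => (hind2 z).symm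
        have hφsplit : ∀ z : Euc d, φ z
            = ENNReal.ofReal (lam ^ (d : ℝ)) * ENNReal.ofReal |g (lam • z)| := by
          intro z
          rw [hφ]
          exact ENNReal.ofReal_mul hrd0
        calc ∫⁻ z in Metric.closedBall (0 : Euc d) (1 / lam), φ z
            = ∫⁻ z in Metric.closedBall (0 : Euc d) (1 / lam),
                ENNReal.ofReal (lam ^ (d : ℝ)) * ENNReal.ofReal |g (lam • z)| := by
              exact lintegral_congr fun z => hφsplit z
          _ = ENNReal.ofReal (lam ^ (d : ℝ)) *
                ∫⁻ z in Metric.closedBall (0 : Euc d) (1 / lam),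
                  ENNReal.ofReal |g (lam • z)| :=
              lintegral_const_mul' _ _ ENNReal.ofReal_ne_top
          _ = ENNReal.ofReal (lam ^ (d : ℝ)) * (ENNReal.ofReal (|(lam ^ d)⁻¹|) * V₀) := by
              rw [hset]
          _ = V₀ := by
              rw [← mul_assoc, Real.rpow_natCast,
                abs_of_nonneg (inv_nonneg.2 (by positivity)),
                ← ENNReal.ofReal_mul (by positivity),
                mul_inv_cancel₀ (pow_ne_zero _ hlam0.ne'), ENNReal.ofReal_one, one_mul]
      have hc2 : ∫⁻ z in Metric.closedBall (0 : Euc d) 1 \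
            Metric.closedBall 0 (1 / lam), φ z ≤ ENNReal.ofReal (A * lam') * V₁ := by
        have hann : MeasurableSet (Metric.closedBall (0 : Euc d) 1 \
            Metric.closedBall 0 (1 / lam)) :=
          measurableSet_closedBall.diff measurableSet_closedBall
        have hpt : ∀ z ∈ Metric.closedBall (0 : Euc d) 1 \ Metric.closedBall 0 (1 / lam),
            φ z ≤ ENNReal.ofReal (A * lam') * ENNReal.ofReal (‖z‖ ^ (-γ)) := by
          intro z hz
          apply hφbound
          have hlt : 1 / lam < ‖z‖ :=
            not_le.1 (fun hle => hz.2 (mem_closedBall_zero_iff.2 hle))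
          rw [norm_smul, Real.norm_eq_abs, abs_of_pos hlam0]
          rw [div_lt_iff₀ hlam0] at hlt
          linarith
        calc ∫⁻ z in Metric.closedBall (0 : Euc d) 1 \ Metric.closedBall 0 (1 / lam), φ z
            ≤ ∫⁻ z in Metric.closedBall (0 : Euc d) 1 \ Metric.closedBall 0 (1 / lam),
              ENNReal.ofReal (A * lam') * ENNReal.ofReal (‖z‖ ^ (-γ)) :=
              setLIntegral_mono' hann hpt
          _ = ENNReal.ofReal (A * lam') *
              ∫⁻ z in Metric.closedBall (0 : Euc d) 1 \ Metric.closedBall 0 (1 / lam),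
                ENNReal.ofReal (‖z‖ ^ (-γ)) :=
              lintegral_const_mul' _ _ ENNReal.ofReal_ne_top
          _ ≤ ENNReal.ofReal (A * lam') * V₁ := by
              refine mul_le_mul_right ?_ _
              exact lintegral_mono_set Set.diff_subset
      calc ∫⁻ z in Metric.closedBall (0 : Euc d) 1, φ z
          ≤ ∫⁻ z in Metric.closedBall (0 : Euc d) (1 / lam) ∪
              (Metric.closedBall 0 1 \ Metric.closedBall 0 (1 / lam)), φ z :=
            lintegral_mono_set hsub
        _ ≤ (∫⁻ z in Metric.closedBall (0 : Euc d) (1 / lam), φ z) +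
            ∫⁻ z in Metric.closedBall (0 : Euc d) 1 \ Metric.closedBall 0 (1 / lam), φ z :=
            lintegral_union_le _ _ _
        _ ≤ V₀ + ENNReal.ofReal (A * lam') * V₁ := by
            rw [hc1]
            exact add_le_add le_rfl hc2
    calc ∫⁻ y in S, φ (x - y) * ENNReal.ofReal (θ y)
        ≤ ∫⁻ y in S, φ (x - y) * M := h1
      _ = (∫⁻ y in S, φ (x - y)) * M := h2
      _ = (∫⁻ z in Metric.closedBall (0 : Euc d) 1, φ z) * M := by rw [h3]
      _ ≤ (V₀ + ENNReal.ofReal (A * lam') * V₁) * M := mul_le_mul_left h4 _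
  -- the far part
  have hfar : ∫⁻ y in Sᶜ, φ (x - y) * ENNReal.ofReal (θ y)
      ≤ ENNReal.ofReal (A * lam') * ENNReal.ofReal t := by
    have hb : ∀ y ∈ Sᶜ, φ (x - y) * ENNReal.ofReal (θ y)
        ≤ ENNReal.ofReal (A * lam') * ENNReal.ofReal (θ y) := by
      intro y hy
      refine mul_le_mul_left ?_ _
      have h1 : (1 : ℝ) < dist y x := by
        by_contra hcon
        exact hy (Metric.mem_closedBall.2 (not_lt.1 hcon))
      have hxy : 1 ≤ ‖x - y‖ := by
        rw [← dist_eq_norm, dist_comm]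
        linarith
      have h1z : 1 ≤ ‖lam • (x - y)‖ := by
        rw [norm_smul, Real.norm_eq_abs, abs_of_pos hlam0]
        nlinarith
      calc φ (x - y) ≤ ENNReal.ofReal (A * lam') * ENNReal.ofReal (‖x - y‖ ^ (-γ)) :=
            hφbound _ h1z
        _ ≤ ENNReal.ofReal (A * lam') * ENNReal.ofReal ((1 : ℝ) ^ (-γ)) := by
            refine mul_le_mul_right (ENNReal.ofReal_le_ofReal ?_) _
            exact Real.rpow_le_rpow_of_nonpos one_pos hxy (neg_nonpos.2 hγ0.le)
        _ = ENNReal.ofReal (A * lam') := by rw [Real.one_rpow, ENNReal.ofReal_one, mul_one]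
    calc ∫⁻ y in Sᶜ, φ (x - y) * ENNReal.ofReal (θ y)
        ≤ ∫⁻ y in Sᶜ, ENNReal.ofReal (A * lam') * ENNReal.ofReal (θ y) :=
          setLIntegral_mono' hS.compl hb
      _ = ENNReal.ofReal (A * lam') * ∫⁻ y in Sᶜ, ENNReal.ofReal (θ y) :=
          lintegral_const_mul' _ _ ENNReal.ofReal_ne_top
      _ ≤ ENNReal.ofReal (A * lam') * ∫⁻ y, ENNReal.ofReal (θ y) := by
          refine mul_le_mul_right ?_ _
          exact setLIntegral_le_lintegral _ _
      _ = ENNReal.ofReal (A * lam') * ENNReal.ofReal t := by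
          rw [← ofReal_integral_eq_lintegral_ofReal hθint (Filter.Eventually.of_forall hθ0), ht]
  -- put everything together
  calc ENNReal.ofReal |∫ y, lam ^ (d : ℝ) * g (lam • (x - y)) * θ y|
      ≤ ∫⁻ y, φ (x - y) * ENNReal.ofReal (θ y) := step1
    _ = (∫⁻ y in S, φ (x - y) * ENNReal.ofReal (θ y)) +
        ∫⁻ y in Sᶜ, φ (x - y) * ENNReal.ofReal (θ y) :=
        (lintegral_add_compl _ hS).symm
    _ ≤ (V₀ + ENNReal.ofReal (A * lam') * V₁) * M +
        ENNReal.ofReal (A * lam') * ENNReal.ofReal t := add_le_add hnear hfar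
    _ ≤ ENNReal.ofReal (C * (1 + lam') * (m + t)) := by
        have hV₀' : V₀ = ENNReal.ofReal V₀.toReal := (ENNReal.ofReal_toReal hV₀fin).symm
        have hV₁' : V₁ = ENNReal.ofReal V₁.toReal := (ENNReal.ofReal_toReal hV₁fin).symm
        have hM' : M = ENNReal.ofReal m := (ENNReal.ofReal_toReal hMfin).symm
        rw [hV₀', hV₁', hM', ← ENNReal.ofReal_mul (by positivity),
          ← ENNReal.ofReal_mul (by positivity), ← ENNReal.ofReal_add (by positivity)
            (by positivity), ← ENNReal.ofReal_mul (by positivity),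
          ← ENNReal.ofReal_add (by positivity) (by positivity)]
        apply ENNReal.ofReal_le_ofReal
        have expand : (V₀.toReal + A * lam' * V₁.toReal) * m + A * lam' * t
            ≤ C * (1 + lam') * (m + t) := by
          rw [hC]
          nlinarith [mul_nonneg hA ht0, mul_nonneg hA hm0, mul_nonneg hv₀ ht0,
            mul_nonneg (mul_nonneg hA hv₁) ht0, mul_nonneg (mul_nonneg hA hv₁) hm0,
            mul_nonneg hlam'0 (mul_nonneg hv₀ hm0), mul_nonneg hlam'0 (mul_nonneg hv₀ ht0),
            mul_nonneg hlam'0 (mul_nonneg (mul_nonneg hA hv₁) ht0),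
            mul_nonneg hlam'0 (mul_nonneg hA hm0),
            mul_nonneg hlam'0 (mul_nonneg hA ht0)]
        exact expand
end
end

section
/- Let δ > 0, C ≥ 0, and γ > 0 with γ ≠ 2, and let H : [0,∞) → [0,∞) be differentiable and satisfy the differential inequality H′(τ) ≤ −2(1 − e^{−2δτ}) H(τ) + C e^{−γτ} for all τ ≥ 0. Then there exists a constant C′ such that H(τ) ≤ C′ e^{−min(2,γ) τ} for all τ ≥ 0. -/
open MeasureTheory Real

/-- **Decay from the entropy differential inequality**.  If `H : [0,∞) → [0,∞)` is
differentiable with `H'(τ) ≤ -2(1 - e^{-2δτ}) H(τ) + C e^{-γτ}` for `δ > 0`, `C ≥ 0` and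
`γ > 0`, `γ ≠ 2`, then `H(τ) ≤ C' e^{-min(2,γ)τ}`. -/
theorem decay_from_differential_inequality
    (δ C γ : ℝ) (hδ : 0 < δ) (hC : 0 ≤ C) (hγ : 0 < γ) (hγ2 : γ ≠ 2)
    (H dH : ℝ → ℝ) (hnn : ∀ τ ≥ (0 : ℝ), 0 ≤ H τ)
    (hderiv : ∀ τ ∈ Set.Ici (0 : ℝ), HasDerivWithinAt H (dH τ) (Set.Ici (0 : ℝ)) τ)
    (hineq : ∀ τ ≥ (0 : ℝ),
      dH τ ≤ -2 * (1 - Real.exp (-2 * δ * τ)) * H τ + C * Real.exp (-γ * τ)) :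
    ∃ C' : ℝ, ∀ τ ≥ (0 : ℝ), H τ ≤ C' * Real.exp (-(min 2 γ) * τ) := by
  have hδ' : δ ≠ 0 := ne_of_gt hδ
  set a : ℝ := 2 - γ with ha_def
  have ha : a ≠ 0 := sub_ne_zero.mpr (Ne.symm hγ2)
  set A : ℝ → ℝ := fun t => 2 * t + (Real.exp (-2 * δ * t) - 1) / δ with hA_def
  have hA_deriv : ∀ t : ℝ, HasDerivAt A (2 - 2 * Real.exp (-2 * δ * t)) t := by
    intro t
    have h1 : HasDerivAt (fun t : ℝ => -2 * δ * t) (-2 * δ) t := by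
      simpa using (hasDerivAt_id t).const_mul (-2 * δ)
    have h2 : HasDerivAt (fun t : ℝ => Real.exp (-2 * δ * t))
        (Real.exp (-2 * δ * t) * (-2 * δ)) t := (Real.hasDerivAt_exp _).comp t h1
    have h3 : HasDerivAt (fun t : ℝ => (Real.exp (-2 * δ * t) - 1) / δ)
        ((Real.exp (-2 * δ * t) * (-2 * δ)) / δ) t := (h2.sub_const 1).div_const δ
    have h4 : HasDerivAt (fun t : ℝ => 2 * t) 2 t := by
      simpa using (hasDerivAt_id t).const_mul (2 : ℝ)
    have := h4.add h3
    convert this using 1 <;> first | rfl | (field_simp; ring)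
  set ψ : ℝ → ℝ := fun t => H t * Real.exp (A t) - (C / a) * Real.exp (a * t) with hψ_def
  set dψ : ℝ → ℝ := fun t =>
    (dH t + (2 - 2 * Real.exp (-2 * δ * t)) * H t) * Real.exp (A t) - C * Real.exp (a * t)
    with hdψ_def
  have hψ_deriv : ∀ t ∈ Set.Ici (0 : ℝ), HasDerivWithinAt ψ (dψ t) (Set.Ici (0 : ℝ)) t := by
    intro t ht
    have hE : HasDerivWithinAt (fun s => Real.exp (A s))
        (Real.exp (A t) * (2 - 2 * Real.exp (-2 * δ * t))) (Set.Ici (0 : ℝ)) t :=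
      (Real.hasDerivAt_exp (A t)).comp_hasDerivWithinAt t (hA_deriv t).hasDerivWithinAt
    have hF : HasDerivWithinAt (fun s => H s * Real.exp (A s))
        (dH t * Real.exp (A t) + H t * (Real.exp (A t) * (2 - 2 * Real.exp (-2 * δ * t))))
        (Set.Ici (0 : ℝ)) t := (hderiv t ht).mul hE
    have hG : HasDerivWithinAt (fun s => (C / a) * Real.exp (a * s))
        ((C / a) * (Real.exp (a * t) * a)) (Set.Ici (0 : ℝ)) t := by
      have h1 : HasDerivAt (fun s : ℝ => a * s) a t := by
        simpa using (hasDerivAt_id t).const_mul a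
      exact (((Real.hasDerivAt_exp _).comp t h1).const_mul (C / a)).hasDerivWithinAt
    have := hF.sub hG
    convert this using 1 <;> first | rfl | (simp only [hdψ_def]; field_simp; try ring)
  have hdψ_nonpos : ∀ t ∈ Set.Ici (0 : ℝ), dψ t ≤ 0 := by
    intro t ht
    simp only [hdψ_def, sub_nonpos]
    have hHt := hnn t ht
    have h1 : dH t + (2 - 2 * Real.exp (-2 * δ * t)) * H t ≤ C * Real.exp (-γ * t) := by
      have := hineq t ht
      nlinarith [this]
    have h2 : (dH t + (2 - 2 * Real.exp (-2 * δ * t)) * H t) * Real.exp (A t)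
        ≤ C * Real.exp (-γ * t) * Real.exp (A t) := by
      exact mul_le_mul_of_nonneg_right h1 (Real.exp_pos _).le
    refine h2.trans ?_
    rw [mul_assoc, ← Real.exp_add]
    have h3 : -γ * t + A t ≤ a * t := by
      have hexp : Real.exp (-2 * δ * t) ≤ 1 := by
        apply Real.exp_le_one_iff.mpr
        have : 0 ≤ t := ht
        nlinarith
      have : (Real.exp (-2 * δ * t) - 1) / δ ≤ 0 := by
        apply div_nonpos_of_nonpos_of_nonneg (by linarith) hδ.le
      simp only [hA_def, ha_def]
      nlinarith
    exact mul_le_mul_of_nonneg_left (Real.exp_le_exp.mpr h3) hC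
  have hcont : ContinuousOn ψ (Set.Ici (0 : ℝ)) :=
    fun t ht => (hψ_deriv t ht).continuousWithinAt
  have hanti : AntitoneOn ψ (Set.Ici (0 : ℝ)) := by
    apply antitoneOn_of_hasDerivWithinAt_nonpos (convex_Ici 0) hcont (f' := dψ)
    · intro t ht
      rw [interior_Ici] at ht ⊢
      exact (hψ_deriv t (Set.mem_Ici.mpr (le_of_lt ht))).mono Set.Ioi_subset_Ici_self
    · intro t ht
      rw [interior_Ici] at ht
      exact hdψ_nonpos t (Set.mem_Ici.mpr (le_of_lt ht))
  refine ⟨Real.exp (1 / δ) * (H 0 + C / |a|), ?_⟩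
  intro τ hτ
  have hψτ : ψ τ ≤ ψ 0 := hanti Set.self_mem_Ici hτ hτ
  have hA0 : A 0 = 0 := by simp [hA_def]
  have hψ0 : ψ 0 = H 0 - C / a := by simp [hψ_def, hA0]
  -- key intermediate bound
  have hkey : H τ * Real.exp (A τ) ≤ (H 0 + C / |a|) * Real.exp ((2 - min 2 γ) * τ) := by
    have h1 : H τ * Real.exp (A τ) ≤ H 0 - C / a + (C / a) * Real.exp (a * τ) := by
      have := hψτ
      rw [hψ0] at this
      simp only [hψ_def] at this
      linarith
    rcases lt_or_gt_of_ne hγ2 with hlt | hgt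
    · -- γ < 2, a > 0, min = γ, 2 - min = a
      have hapos : 0 < a := by simp only [ha_def]; linarith
      have habs : |a| = a := abs_of_pos hapos
      have hmin : min 2 γ = γ := min_eq_right hlt.le
      have h2m : (2 : ℝ) - min 2 γ = a := by rw [hmin]
      rw [h2m, habs]
      have hexp1 : (1 : ℝ) ≤ Real.exp (a * τ) := by
        apply Real.one_le_exp
        positivity
      have hCa : 0 ≤ C / a := div_nonneg hC hapos.le
      have hH0 : 0 ≤ H 0 := hnn 0 le_rfl
      nlinarith
    · -- γ > 2, a < 0, min = 2, 2 - min = 0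
      have haneg : a < 0 := by simp only [ha_def]; linarith
      have habs : |a| = -a := abs_of_neg haneg
      have hmin : min 2 γ = 2 := min_eq_left hgt.le
      have h2m : (2 : ℝ) - min 2 γ = 0 := by rw [hmin]; ring
      rw [h2m, habs]
      have hexp1 : Real.exp (a * τ) ≤ 1 := by
        apply Real.exp_le_one_iff.mpr
        exact mul_nonpos_of_nonpos_of_nonneg haneg.le hτ
      have hCa : C / a ≤ 0 := div_nonpos_of_nonneg_of_nonpos hC haneg.le
      have hexp0 : 0 < Real.exp (a * τ) := Real.exp_pos _
      simp only [zero_mul, Real.exp_zero, mul_one]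
      have : (C / a) * Real.exp (a * τ) ≤ 0 :=
        mul_nonpos_of_nonpos_of_nonneg hCa hexp0.le
      have hCna : C / (-a) = -(C / a) := by rw [div_neg]
      linarith [h1, this]
  -- now divide by exp (A τ)
  have hEpos : 0 < Real.exp (A τ) := Real.exp_pos _
  have h5 : H τ ≤ (H 0 + C / |a|) * Real.exp ((2 - min 2 γ) * τ) * Real.exp (-(A τ)) := by
    rw [← mul_le_mul_iff_left₀ hEpos]
    calc H τ * Real.exp (A τ) ≤ (H 0 + C / |a|) * Real.exp ((2 - min 2 γ) * τ) := hkey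
    _ = (H 0 + C / |a|) * Real.exp ((2 - min 2 γ) * τ) * Real.exp (-(A τ)) * Real.exp (A τ) := by
        rw [mul_assoc, mul_assoc, ← Real.exp_add, ← Real.exp_add]; ring_nf
  refine h5.trans ?_
  have hnonneg : 0 ≤ H 0 + C / |a| := by
    have h0 := hnn 0 le_rfl
    have h1 : 0 ≤ C / |a| := div_nonneg hC (abs_nonneg a)
    linarith
  have hexp : Real.exp ((2 - min 2 γ) * τ) * Real.exp (-A τ)
      ≤ Real.exp (1 / δ) * Real.exp (-(min 2 γ) * τ) := by
    rw [← Real.exp_add, ← Real.exp_add]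
    apply Real.exp_le_exp.mpr
    have hexppos : (0 : ℝ) ≤ Real.exp (-2 * δ * τ) := (Real.exp_pos _).le
    have h1 : (1 - Real.exp (-2 * δ * τ)) / δ ≤ 1 / δ := by
      gcongr
      linarith
    have h2 : -((Real.exp (-2 * δ * τ) - 1) / δ) = (1 - Real.exp (-2 * δ * τ)) / δ := by ring
    simp only [hA_def]
    push_cast
    nlinarith [h1, h2]
  calc (H 0 + C / |a|) * Real.exp ((2 - min 2 γ) * τ) * Real.exp (-A τ)
      = (H 0 + C / |a|) * (Real.exp ((2 - min 2 γ) * τ) * Real.exp (-A τ)) := by ring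
    _ ≤ (H 0 + C / |a|) * (Real.exp (1 / δ) * Real.exp (-(min 2 γ) * τ)) :=
        mul_le_mul_of_nonneg_left hexp hnonneg
    _ = Real.exp (1 / δ) * (H 0 + C / |a|) * Real.exp (-(min 2 γ) * τ) := by ring
end
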